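/- Let X and Y be finite sets with |Y| > 1, g : X → Y any map, and k ≥ 1. Let q be a probability distribution on X^{k+1} whose first-k marginal and last-k marginal coincide; call this common k-marginal q_k. Let P be the k-th order Markov approximation of q: P(w,x) = q(w,x)/q_k(w) if q_k(w) > 0, and P(w,x) = 1/|X| otherwise. Let r on Y^{k+1} be the pushforward of q under coordinatewise application of g, with k-marginal r_k, and let Q be the k-th order Markov approximation of r: Q(w,z) = r(w,z)/r_k(w) if r_k(w) > 0, and Q(w,z) = 1/|Y| otherwise. If the Doob lift P^{(k)} of P (a stochastic matrix on X^k) has a single recurrent class, then Q has a unique invariant distribution μ on Y^k (and μ = r_k). -/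

import Mathlib

open Finset
open scoped Classical

noncomputable section

/-- The first `k` coordinates of a length-`k+1` tuple. -/
def front {Z : Type*} {k : ℕ} (v : Fin (k + 1) → Z) : Fin k → Z :=
  fun i => v i.castSucc

/-- The last `k` coordinates of a length-`k+1` tuple. -/
def back {Z : Type*} {k : ℕ} (v : Fin (k + 1) → Z) : Fin k → Z :=
  fun i => v i.succ

/-- `p` is a probability distribution on the finite type `α`. -/
def IsProbDist {α : Type*} [Fintype α] (p : α → ℝ) : Prop :=
  (∀ a, 0 ≤ p a) ∧ ∑ a, p a = 1

/-- `Q` is a `k`-th order Markov transition matrix on `Z`. -/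
def IsTransMat {Z : Type*} [Fintype Z] {k : ℕ} (Q : (Fin k → Z) → Z → ℝ) : Prop :=
  (∀ w z, 0 ≤ Q w z) ∧ ∀ w, ∑ z, Q w z = 1

/-- `μ` is an invariant (probability) distribution for the `k`-th order transition matrix `Q`:
`μ(z₁,…,z_k) = ∑_{z₀} μ(z₀,…,z_{k-1}) Q((z₀,…,z_{k-1}), z_k)`. -/
def IsInvariantFor {Z : Type*} [Fintype Z] {k : ℕ} (μ : (Fin k → Z) → ℝ)
    (Q : (Fin k → Z) → Z → ℝ) : Prop :=
  IsProbDist μ ∧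
    ∀ w : Fin k → Z,
      μ w = ∑ z0 : Z,
        μ (front (Fin.cons z0 w)) *
          Q (front (Fin.cons z0 w)) ((Fin.cons z0 w : Fin (k + 1) → Z) (Fin.last k))

/-- `P` is a (first-order) stochastic matrix. -/
def IsStochastic {S : Type*} [Fintype S] (P : Matrix S S ℝ) : Prop :=
  (∀ i j, 0 ≤ P i j) ∧ ∀ i, ∑ j, P i j = 1

/-- State `j` is accessible from state `i` under the stochastic matrix `P`. -/
def Accessible {S : Type*} [Fintype S] (P : Matrix S S ℝ) (i j : S) : Prop :=
  ∃ n : ℕ, 1 ≤ n ∧ 0 < (P ^ n) i j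

/-- State `i` is recurrent for the stochastic matrix `P`. -/
def Recurrent {S : Type*} [Fintype S] (P : Matrix S S ℝ) (i : S) : Prop :=
  ∀ j, Accessible P i j → Accessible P j i

/-- `P` has a single recurrent class. -/
def SingleRecurrentClass {S : Type*} [Fintype S] (P : Matrix S S ℝ) : Prop :=
  (∃ i, Recurrent P i) ∧ ∀ i j, Recurrent P i → Recurrent P j → Accessible P i j

/-- The Doob lift of a `k`-th order transition matrix `Q` on `Z` to a first-order
stochastic matrix on `Z^k`. -/
def doobLift {Z : Type*} {k : ℕ} (Q : (Fin k → Z) → Z → ℝ) (hk : 0 < k) :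
    Matrix (Fin k → Z) (Fin k → Z) ℝ :=
  Matrix.of fun w w' =>
    if ∀ (i : Fin k) (h : (i : ℕ) + 1 < k), w' i = w ⟨(i : ℕ) + 1, h⟩ then
      Q w (w' ⟨k - 1, Nat.sub_lt hk Nat.one_pos⟩)
    else 0


/-- invariant distribution, matrix form -/
def InvDist {S : Type*} [Fintype S] (μ : S → ℝ) (M : Matrix S S ℝ) : Prop :=
  (∀ i, 0 ≤ μ i) ∧ (∑ i, μ i = 1) ∧ ∀ j, ∑ i, μ i * M i j = μ j

section General
variable {S : Type*} [Fintype S] {M : Matrix S S ℝ}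

lemma pow_entry_nonneg (hM : IsStochastic M) (n : ℕ) (i j : S) : 0 ≤ (M ^ n) i j := by
  induction n generalizing i j with
  | zero => simp [Matrix.one_apply]; split <;> norm_num
  | succ n ih =>
    rw [pow_succ, Matrix.mul_apply]
    exact Finset.sum_nonneg fun t _ => mul_nonneg (ih i t) (hM.1 t j)

lemma pow_row_sum (hM : IsStochastic M) (n : ℕ) (i : S) : ∑ j, (M ^ n) i j = 1 := by
  induction n generalizing i with
  | zero => simp [Matrix.one_apply]
  | succ n ih =>
    simp only [pow_succ, Matrix.mul_apply]
    rw [Finset.sum_comm]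
    calc ∑ t, ∑ j, (M ^ n) i t * M t j = ∑ t, (M ^ n) i t * ∑ j, M t j := by
          simp [Finset.mul_sum]
      _ = 1 := by simp only [hM.2]; simpa using ih i

lemma invdist_pow (hM : IsStochastic M) {μ : S → ℝ} (hμ : InvDist μ M) (n : ℕ) (j : S) :
    ∑ i, μ i * (M ^ n) i j = μ j := by
  induction n generalizing j with
  | zero => simp [Matrix.one_apply]
  | succ n ih =>
    simp only [pow_succ, Matrix.mul_apply, Finset.mul_sum]
    rw [Finset.sum_comm]
    calc ∑ t, ∑ i, μ i * ((M ^ n) i t * M t j)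
        = ∑ t, (∑ i, μ i * (M ^ n) i t) * M t j := by
          congr 1; ext t; rw [Finset.sum_mul]; congr 1; ext i; ring
      _ = ∑ t, μ t * M t j := by simp only [ih]
      _ = μ j := hμ.2.2 j

lemma accessible_trans (hM : IsStochastic M) {i j l : S}
    (h1 : Accessible M i j) (h2 : Accessible M j l) : Accessible M i l := by
  obtain ⟨n, hn, hnp⟩ := h1
  obtain ⟨m, hm, hmp⟩ := h2
  refine ⟨n + m, le_trans hn (Nat.le_add_right _ _), ?_⟩
  rw [pow_add, Matrix.mul_apply]
  have : (M ^ n) i j * (M ^ m) j l ≤ ∑ t, (M ^ n) i t * (M ^ m) t l :=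
    Finset.single_le_sum (fun t _ => mul_nonneg (pow_entry_nonneg hM n i t)
      (pow_entry_nonneg hM m t l)) (Finset.mem_univ j)
  exact lt_of_lt_of_le (mul_pos hnp hmp) this

lemma supp_closed (hM : IsStochastic M) {μ : S → ℝ} (hμ : InvDist μ M) {i j : S}
    (hi : 0 < μ i) (hij : Accessible M i j) : 0 < μ j := by
  obtain ⟨n, _, hnp⟩ := hij
  have h := invdist_pow hM hμ n j
  have : μ i * (M ^ n) i j ≤ ∑ t, μ t * (M ^ n) t j :=
    Finset.single_le_sum (fun t _ => mul_nonneg (hμ.1 t) (pow_entry_nonneg hM n t j))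
      (Finset.mem_univ i)
  rw [h] at this
  exact lt_of_lt_of_le (mul_pos hi hnp) this

/-- every state in the support of an invariant distribution is recurrent -/
lemma supp_recurrent (hM : IsStochastic M) {μ : S → ℝ} (hμ : InvDist μ M) {i0 : S}
    (hi0 : 0 < μ i0) : Recurrent M i0 := by
  intro l hacc
  by_contra hnot
  obtain ⟨n, hn1, hnpos⟩ := hacc
  set B : Finset S := univ.filter (fun i => Accessible M i i0 ∨ i = i0) with hB
  have hi0B : i0 ∈ B := by simp [hB]
  have hlB : l ∉ B := by
    simp only [hB, Finset.mem_filter, Finset.mem_univ, true_and]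
    rintro (h | rfl)
    · exact hnot h
    · exact hnot ⟨n, hn1, hnpos⟩
  -- membership in B is closed under backward accessibility
  have hBacc : ∀ j i, i ∈ B → Accessible M j i → j ∈ B := by
    intro j i hiB hji
    simp only [hB, Finset.mem_filter, Finset.mem_univ, true_and] at hiB ⊢
    rcases hiB with h | rfl
    · exact Or.inl (accessible_trans hM hji h)
    · exact Or.inl hji
  have key : ∑ i ∈ B, μ i = ∑ j ∈ B, μ j * ∑ i ∈ B, (M ^ n) j i := by
    calc ∑ i ∈ B, μ i = ∑ i ∈ B, ∑ j, μ j * (M ^ n) j i := by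
          refine Finset.sum_congr rfl fun i _ => (invdist_pow hM hμ n i).symm
      _ = ∑ j, ∑ i ∈ B, μ j * (M ^ n) j i := Finset.sum_comm
      _ = ∑ j, μ j * ∑ i ∈ B, (M ^ n) j i := by simp [Finset.mul_sum]
      _ = ∑ j ∈ B, μ j * ∑ i ∈ B, (M ^ n) j i := by
          symm
          refine Finset.sum_subset (Finset.subset_univ B) ?_
          intro j _ hjB
          have : ∀ i ∈ B, (M ^ n) j i = 0 := by
            intro i hiB
            by_contra hne
            have hpos : 0 < (M ^ n) j i :=
              lt_of_le_of_ne (pow_entry_nonneg hM n j i) (Ne.symm hne)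
            exact hjB (hBacc j i hiB ⟨n, hn1, hpos⟩)
          rw [Finset.sum_eq_zero this, mul_zero]
  have hlt : ∑ j ∈ B, μ j * ∑ i ∈ B, (M ^ n) j i < ∑ j ∈ B, μ j := by
    refine Finset.sum_lt_sum (fun j _ => ?_) ⟨i0, hi0B, ?_⟩
    · have hle : ∑ i ∈ B, (M ^ n) j i ≤ 1 := by
        calc ∑ i ∈ B, (M ^ n) j i ≤ ∑ i, (M ^ n) j i :=
              Finset.sum_le_sum_of_subset_of_nonneg (Finset.subset_univ B)
                (fun i _ _ => pow_entry_nonneg hM n j i)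
          _ = 1 := pow_row_sum hM n j
      calc μ j * ∑ i ∈ B, (M ^ n) j i ≤ μ j * 1 :=
            mul_le_mul_of_nonneg_left hle (hμ.1 j)
        _ = μ j := mul_one _
    · have hslt : ∑ i ∈ B, (M ^ n) i0 i < 1 := by
        have h1 : ∑ i ∈ insert l B, (M ^ n) i0 i ≤ 1 := by
          calc ∑ i ∈ insert l B, (M ^ n) i0 i ≤ ∑ i, (M ^ n) i0 i :=
                Finset.sum_le_sum_of_subset_of_nonneg (Finset.subset_univ _)
                  (fun i _ _ => pow_entry_nonneg hM n i0 i)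
            _ = 1 := pow_row_sum hM n i0
        rw [Finset.sum_insert hlB] at h1
        linarith
      calc μ i0 * ∑ i ∈ B, (M ^ n) i0 i < μ i0 * 1 :=
            mul_lt_mul_of_pos_left hslt hi0
        _ = μ i0 := mul_one _
  rw [key] at hlt
  exact lt_irrefl _ hlt

/-- uniqueness of the invariant distribution for a single recurrent class -/
lemma invdist_unique (hM : IsStochastic M) (hrec : SingleRecurrentClass M)
    {μ ν : S → ℝ} (hμ : InvDist μ M) (hν : InvDist ν M) : μ = ν := by
  -- support of any invariant dist = recurrent states
  have hsupp : ∀ (ρ : S → ℝ), InvDist ρ M → ∀ i, (0 < ρ i ↔ Recurrent M i) := by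
    intro ρ hρ i
    constructor
    · exact fun h => supp_recurrent hM hρ h
    · intro hi
      obtain ⟨i1, hi1⟩ : ∃ i1, 0 < ρ i1 := by
        by_contra hc
        push_neg at hc
        have : ∑ j, ρ j ≤ 0 := Finset.sum_nonpos fun j _ => hc j
        rw [hρ.2.1] at this; linarith
      have hrec1 : Recurrent M i1 := supp_recurrent hM hρ hi1
      exact supp_closed hM hρ hi1 (hrec.2 i1 i hrec1 hi)
  set R : Finset S := univ.filter (Recurrent M) with hR
  have hRne : R.Nonempty := by
    obtain ⟨i, hi⟩ := hrec.1
    exact ⟨i, by simp [hR, hi]⟩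
  obtain ⟨i0, hi0R, hi0min⟩ := Finset.exists_min_image R (fun i => μ i / ν i) hRne
  have hi0rec : Recurrent M i0 := by simpa [hR] using hi0R
  have hνpos : ∀ i ∈ R, 0 < ν i := by
    intro i hi
    exact ((hsupp ν hν i).2 (by simpa [hR] using hi))
  set c := μ i0 / ν i0 with hc
  have hcν : ∀ i, c * ν i ≤ μ i := by
    intro i
    by_cases hiR : i ∈ R
    · have h := hi0min i hiR
      have := hνpos i hiR
      exact (le_div_iff₀ this).1 h
    · have h1 : μ i = 0 := by
        by_contra h
        have : 0 < μ i := lt_of_le_of_ne (hμ.1 i) (Ne.symm h)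
        exact hiR (by simp [hR, (hsupp μ hμ i).1 this])
      have h2 : ν i = 0 := by
        by_contra h
        have : 0 < ν i := lt_of_le_of_ne (hν.1 i) (Ne.symm h)
        exact hiR (by simp [hR, (hsupp ν hν i).1 this])
      simp [h1, h2]
  set lam : S → ℝ := fun i => μ i - c * ν i with hlam
  have hlamnn : ∀ i, 0 ≤ lam i := fun i => sub_nonneg.2 (hcν i)
  have hlam0 : lam i0 = 0 := by
    have hne : ν i0 ≠ 0 := ne_of_gt (hνpos i0 hi0R)
    simp only [hlam, hc]
    field_simp
    ring
  have hlaminv : ∀ n j, ∑ i, lam i * (M ^ n) i j = lam j := by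
    intro n j
    simp only [hlam, sub_mul]
    rw [Finset.sum_sub_distrib]
    rw [invdist_pow hM hμ n j]
    have : ∑ i, c * ν i * (M ^ n) i j = c * ∑ i, ν i * (M ^ n) i j := by
      rw [Finset.mul_sum]; congr 1; ext i; ring
    rw [this, invdist_pow hM hν n j]
  have hlamz : ∀ i, lam i = 0 := by
    intro i
    by_cases hiR : i ∈ R
    · have hirec : Recurrent M i := by simpa [hR] using hiR
      obtain ⟨n, _, hnp⟩ := hrec.2 i i0 hirec hi0rec
      have h := hlaminv n i0
      rw [hlam0] at h
      have hall : ∀ j ∈ univ, lam j * (M ^ n) j i0 = 0 := by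
        rw [← Finset.sum_eq_zero_iff_of_nonneg
          (fun j _ => mul_nonneg (hlamnn j) (pow_entry_nonneg hM n j i0))]
        exact h
      have := hall i (Finset.mem_univ i)
      rcases mul_eq_zero.1 this with h' | h'
      · exact h'
      · exact absurd h' (ne_of_gt hnp)
    · have h1 : μ i = 0 := by
        by_contra h
        have : 0 < μ i := lt_of_le_of_ne (hμ.1 i) (Ne.symm h)
        exact hiR (by simp [hR, (hsupp μ hμ i).1 this])
      have h2 : ν i = 0 := by
        by_contra h
        have : 0 < ν i := lt_of_le_of_ne (hν.1 i) (Ne.symm h)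
        exact hiR (by simp [hR, (hsupp ν hν i).1 this])
      simp [hlam, h1, h2]
  have hceq : c = 1 := by
    have h1 : ∑ i, μ i = ∑ i, c * ν i := by
      refine Finset.sum_congr rfl fun i _ => ?_
      have := hlamz i
      simp only [hlam] at this
      linarith
    rw [hμ.2.1, ← Finset.mul_sum, hν.2.1, mul_one] at h1
    exact h1.symm
  funext i
  have := hlamz i
  simp only [hlam, hceq, one_mul] at this
  linarith

end General

section DoobLemmas
variable {Z : Type*} [Fintype Z] {k : ℕ}

/-- shift a new symbol in at the end -/
def shiftIn (w : Fin k → Z) (z : Z) : Fin k → Z := back (Fin.snoc w z)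

/-- prepend a symbol and drop the last -/
def consInit (z0 : Z) (u : Fin k → Z) : Fin k → Z := front (Fin.cons z0 u)

lemma last_eq_succ (hk : 0 < k) :
    Fin.last k = Fin.succ ⟨k - 1, Nat.sub_lt hk Nat.one_pos⟩ := by
  apply Fin.ext; simp [Fin.last, Fin.val_succ]; omega

lemma shiftIn_apply_lt (w : Fin k → Z) (z : Z) {j : ℕ} (hj : j < k) (h : j + 1 < k) :
    shiftIn w z ⟨j, hj⟩ = w ⟨j + 1, h⟩ := by
  show (Fin.snoc w z : Fin (k + 1) → Z) (Fin.succ ⟨j, hj⟩) = _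
  have he : Fin.succ (⟨j, hj⟩ : Fin k) = Fin.castSucc ⟨j + 1, h⟩ := by
    apply Fin.ext; simp
  rw [he, Fin.snoc_castSucc]

lemma shiftIn_apply_last (hk : 0 < k) (w : Fin k → Z) (z : Z) :
    shiftIn w z ⟨k - 1, Nat.sub_lt hk Nat.one_pos⟩ = z := by
  show (Fin.snoc w z : Fin (k + 1) → Z) (Fin.succ ⟨k - 1, _⟩) = _
  rw [← last_eq_succ hk, Fin.snoc_last]

lemma consInit_apply_zero (hk : 0 < k) (z0 : Z) (u : Fin k → Z) :
    consInit z0 u ⟨0, hk⟩ = z0 := by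
  show (Fin.cons z0 u : Fin (k + 1) → Z) (Fin.castSucc ⟨0, hk⟩) = _
  have he : Fin.castSucc (⟨0, hk⟩ : Fin k) = 0 := by apply Fin.ext; simp
  rw [he, Fin.cons_zero]

lemma consInit_apply_succ (z0 : Z) (u : Fin k → Z) {j : ℕ} (h : j + 1 < k) (hj : j < k) :
    consInit z0 u ⟨j + 1, h⟩ = u ⟨j, hj⟩ := by
  show (Fin.cons z0 u : Fin (k + 1) → Z) (Fin.castSucc ⟨j + 1, h⟩) = _
  have he : Fin.castSucc (⟨j + 1, h⟩ : Fin k)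
      = Fin.succ (⟨j, hj⟩ : Fin k) := by
    apply Fin.ext; simp
  rw [he, Fin.cons_succ]

lemma cons_apply_last (hk : 0 < k) (z0 : Z) (u : Fin k → Z) :
    (Fin.cons z0 u : Fin (k + 1) → Z) (Fin.last k) = u ⟨k - 1, Nat.sub_lt hk Nat.one_pos⟩ := by
  rw [last_eq_succ hk, Fin.cons_succ]

lemma doobLift_apply (Q : (Fin k → Z) → Z → ℝ) (hk : 0 < k) (w w' : Fin k → Z) :
    doobLift Q hk w w' =
      if ∀ (i : Fin k) (h : (i : ℕ) + 1 < k), w' i = w ⟨(i : ℕ) + 1, h⟩ then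
        Q w (w' ⟨k - 1, Nat.sub_lt hk Nat.one_pos⟩)
      else 0 := rfl

lemma doobLift_cond_iff (hk : 0 < k) (w w' : Fin k → Z) :
    (∀ (i : Fin k) (h : (i : ℕ) + 1 < k), w' i = w ⟨(i : ℕ) + 1, h⟩) ↔
      w' = shiftIn w (w' ⟨k - 1, Nat.sub_lt hk Nat.one_pos⟩) := by
  constructor
  · intro hc
    funext i
    rcases i with ⟨j, hj⟩
    by_cases h : j + 1 < k
    · rw [shiftIn_apply_lt w _ hj h]
      exact hc ⟨j, hj⟩ h
    · have he : (⟨j, hj⟩ : Fin k) = ⟨k - 1, Nat.sub_lt hk Nat.one_pos⟩ := by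
        apply Fin.ext; simp; omega
      rw [he, shiftIn_apply_last hk]
  · intro h i hi
    rcases i with ⟨j, hj⟩
    conv_lhs => rw [h]
    rw [shiftIn_apply_lt w _ hj hi]

lemma shiftIn_injective (hk : 0 < k) (w : Fin k → Z) : Function.Injective (shiftIn w) := by
  intro z z' h
  have := congrFun h ⟨k - 1, Nat.sub_lt hk Nat.one_pos⟩
  rwa [shiftIn_apply_last hk, shiftIn_apply_last hk] at this

lemma consInit_cond_iff (hk : 0 < k) (w u : Fin k → Z) :
    (∀ (i : Fin k) (h : (i : ℕ) + 1 < k), u i = w ⟨(i : ℕ) + 1, h⟩) ↔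
      w = consInit (w ⟨0, hk⟩) u := by
  constructor
  · intro hc
    funext i
    rcases i with ⟨j, hj⟩
    cases j with
    | zero =>
      rw [consInit_apply_zero hk]
    | succ j =>
      have hjk : j < k := lt_trans (Nat.lt_succ_self j) hj
      rw [consInit_apply_succ _ _ hj hjk]
      exact (hc ⟨j, hjk⟩ hj).symm
  · intro h i hi
    rcases i with ⟨j, hj⟩
    conv_rhs => rw [h]
    rw [consInit_apply_succ _ _ hi hj]

lemma consInit_injective (hk : 0 < k) (u : Fin k → Z) :
    Function.Injective (fun z0 => consInit z0 u) := by
  intro z z' h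
  have := congrFun h ⟨0, hk⟩
  simp only at this
  rwa [consInit_apply_zero hk, consInit_apply_zero hk] at this

lemma doobLift_apply_shiftIn (Q : (Fin k → Z) → Z → ℝ) (hk : 0 < k) (w : Fin k → Z) (z : Z) :
    doobLift Q hk w (shiftIn w z) = Q w z := by
  rw [doobLift_apply, if_pos, shiftIn_apply_last hk]
  intro i hi
  rcases i with ⟨j, hj⟩
  rw [shiftIn_apply_lt w _ hj hi]

lemma doobLift_apply_consInit (Q : (Fin k → Z) → Z → ℝ) (hk : 0 < k) (z0 : Z) (u : Fin k → Z) :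
    doobLift Q hk (consInit z0 u) u
      = Q (consInit z0 u) (u ⟨k - 1, Nat.sub_lt hk Nat.one_pos⟩) := by
  rw [doobLift_apply, if_pos]
  intro i hi
  rcases i with ⟨j, hj⟩
  rw [consInit_apply_succ _ _ hi hj]

lemma doobLift_eq_zero {Q : (Fin k → Z) → Z → ℝ} (hk : 0 < k) {w w' : Fin k → Z}
    (h : w' ∉ Finset.image (shiftIn w) Finset.univ) : doobLift Q hk w w' = 0 := by
  rw [doobLift_apply, if_neg]
  intro hc
  exact h (Finset.mem_image.2 ⟨w' ⟨k - 1, Nat.sub_lt hk Nat.one_pos⟩, Finset.mem_univ _,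
    ((doobLift_cond_iff hk w w').1 hc).symm⟩)

lemma doobLift_row_sum (Q : (Fin k → Z) → Z → ℝ) (hk : 0 < k) (w : Fin k → Z) :
    ∑ w', doobLift Q hk w w' = ∑ z, Q w z := by
  rw [← Finset.sum_subset (Finset.subset_univ (Finset.image (shiftIn w) Finset.univ))
    (fun w' _ h => doobLift_eq_zero hk h)]
  rw [Finset.sum_image (fun z _ z' _ h => shiftIn_injective hk w h)]
  exact Finset.sum_congr rfl fun z _ => doobLift_apply_shiftIn Q hk w z

lemma doobLift_col_eq_zero {Q : (Fin k → Z) → Z → ℝ} (hk : 0 < k) {w u : Fin k → Z}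
    (h : w ∉ Finset.image (fun z0 => consInit z0 u) Finset.univ) : doobLift Q hk w u = 0 := by
  rw [doobLift_apply, if_neg]
  intro hc
  exact h (Finset.mem_image.2 ⟨w ⟨0, hk⟩, Finset.mem_univ _,
    ((consInit_cond_iff hk w u).1 hc).symm⟩)

lemma doobLift_col_sum (Q : (Fin k → Z) → Z → ℝ) (hk : 0 < k)
    (f : (Fin k → Z) → ℝ) (u : Fin k → Z) :
    ∑ w, f w * doobLift Q hk w u
      = ∑ z0, f (consInit z0 u) * Q (consInit z0 u) (u ⟨k - 1, Nat.sub_lt hk Nat.one_pos⟩) := by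
  rw [← Finset.sum_subset
    (Finset.subset_univ (Finset.image (fun z0 => consInit z0 u) Finset.univ))
    (fun w _ h => by rw [doobLift_col_eq_zero hk h, mul_zero])]
  rw [Finset.sum_image (fun z _ z' _ h => consInit_injective hk u h)]
  exact Finset.sum_congr rfl fun z0 _ => by rw [doobLift_apply_consInit Q hk]

lemma doobLift_stochastic {Q : (Fin k → Z) → Z → ℝ} (hk : 0 < k) (hQ : IsTransMat Q) :
    IsStochastic (doobLift Q hk) := by
  constructor
  · intro w w'
    rw [doobLift_apply]
    split_ifs with h
    · exact hQ.1 _ _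
    · exact le_rfl
  · intro w
    rw [doobLift_row_sum Q hk]
    exact hQ.2 w

lemma isInvariantFor_iff_invDist (Q : (Fin k → Z) → Z → ℝ) (hk : 0 < k) (μ : (Fin k → Z) → ℝ) :
    IsInvariantFor μ Q ↔
      (IsProbDist μ ∧ ∀ u, ∑ w, μ w * doobLift Q hk w u = μ u) := by
  have hfront : ∀ (z0 : Z) (u : Fin k → Z), front (Fin.cons z0 u) = consInit z0 u :=
    fun z0 u => rfl
  constructor
  · rintro ⟨hp, hinv⟩
    refine ⟨hp, fun u => ?_⟩
    rw [doobLift_col_sum Q hk, hinv u]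
    refine (Finset.sum_congr rfl fun z0 _ => ?_).symm
    rw [hfront, cons_apply_last hk]
  · rintro ⟨hp, hinv⟩
    refine ⟨hp, fun u => ?_⟩
    rw [← hinv u, doobLift_col_sum Q hk]
    refine Finset.sum_congr rfl fun z0 _ => ?_
    rw [hfront, cons_apply_last hk]

end DoobLemmas

section Equivs
variable (Z : Type*) (k : ℕ)

def snocEquiv : ((Fin k → Z) × Z) ≃ (Fin (k + 1) → Z) where
  toFun p := Fin.snoc p.1 p.2
  invFun v := (front v, v (Fin.last k))
  left_inv p := by
    refine Prod.ext ?_ ?_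
    · funext i
      show (Fin.snoc p.1 p.2 : Fin (k + 1) → Z) i.castSucc = p.1 i
      rw [Fin.snoc_castSucc]
    · show (Fin.snoc p.1 p.2 : Fin (k + 1) → Z) (Fin.last k) = p.2
      rw [Fin.snoc_last]
  right_inv v := Fin.snoc_init_self v

def consEquiv' : (Z × (Fin k → Z)) ≃ (Fin (k + 1) → Z) where
  toFun p := Fin.cons p.1 p.2
  invFun v := (v 0, back v)
  left_inv p := by
    refine Prod.ext ?_ ?_
    · show (Fin.cons p.1 p.2 : Fin (k + 1) → Z) 0 = p.1
      rw [Fin.cons_zero]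
    · funext i
      show (Fin.cons p.1 p.2 : Fin (k + 1) → Z) i.succ = p.2 i
      rw [Fin.cons_succ]
  right_inv v := Fin.cons_self_tail v

variable {Z k}

lemma sum_snoc [Fintype Z] (F : (Fin (k + 1) → Z) → ℝ) :
    ∑ v, F v = ∑ w, ∑ z, F (Fin.snoc w z) := by
  rw [← Equiv.sum_comp (snocEquiv Z k) F]
  exact Fintype.sum_prod_type _

lemma sum_cons [Fintype Z] (F : (Fin (k + 1) → Z) → ℝ) :
    ∑ v, F v = ∑ z, ∑ w, F (Fin.cons z w) := by
  rw [← Equiv.sum_comp (consEquiv' Z k) F]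
  exact Fintype.sum_prod_type _

end Equivs

section Approx
variable {Z : Type*} [Fintype Z] {k : ℕ}

/-- the `k`-marginal of a distribution on `Z^{k+1}` -/
def marg (p : (Fin (k + 1) → Z) → ℝ) (w : Fin k → Z) : ℝ := ∑ z, p (Fin.snoc w z)

variable {p : (Fin (k + 1) → Z) → ℝ}

lemma marg_nonneg (hp0 : ∀ v, 0 ≤ p v) (w : Fin k → Z) : 0 ≤ marg p w :=
  Finset.sum_nonneg fun z _ => hp0 _

lemma snoc_le_marg (hp0 : ∀ v, 0 ≤ p v) (w : Fin k → Z) (z : Z) :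
    p (Fin.snoc w z) ≤ marg p w :=
  Finset.single_le_sum (fun z' _ => hp0 _) (Finset.mem_univ z)

lemma sum_marg (hp1 : ∑ v, p v = 1) : ∑ w, marg p w = 1 := by
  calc ∑ w, marg p w = ∑ v, p v := (sum_snoc p).symm
    _ = 1 := hp1

lemma le_marg_back (hp0 : ∀ v, 0 ≤ p v)
    (hpstat : ∀ w : Fin k → Z, ∑ z, p (Fin.snoc w z) = ∑ z, p (Fin.cons z w))
    (v : Fin (k + 1) → Z) : p v ≤ marg p (back v) := by
  have h1 : marg p (back v) = ∑ z, p (Fin.cons z (back v)) := hpstat (back v)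
  have h2 : p (Fin.cons (v 0) (back v)) ≤ ∑ z, p (Fin.cons z (back v)) :=
    Finset.single_le_sum (f := fun z => p (Fin.cons z (back v)))
      (fun z _ => hp0 _) (Finset.mem_univ (v 0))
  have h3 : Fin.cons (v 0) (back v) = v := Fin.cons_self_tail v
  rw [h1]; rw [h3] at h2; exact h2

variable {T : (Fin k → Z) → Z → ℝ}

lemma approx_transMat (hZ : 0 < Fintype.card Z) (hp0 : ∀ v, 0 ≤ p v)
    (hT : ∀ w z, T w z =
      if 0 < marg p w then p (Fin.snoc w z) / marg p w else 1 / (Fintype.card Z : ℝ)) :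
    IsTransMat T := by
  constructor
  · intro w z
    rw [hT]
    split_ifs with h
    · exact div_nonneg (hp0 _) (le_of_lt h)
    · positivity
  · intro w
    by_cases h : 0 < marg p w
    · have : ∑ z, T w z = (∑ z, p (Fin.snoc w z)) / marg p w := by
        rw [Finset.sum_div]
        exact Finset.sum_congr rfl fun z _ => by rw [hT, if_pos h]
      rw [this]
      exact div_self (ne_of_gt h)
    · have : ∑ z, T w z = ∑ _z : Z, 1 / (Fintype.card Z : ℝ) :=
        Finset.sum_congr rfl fun z _ => by rw [hT, if_neg h]
      rw [this, Finset.sum_const, Finset.card_univ, nsmul_eq_mul]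
      field_simp

lemma approx_key (hk : 0 < k) (hp0 : ∀ v, 0 ≤ p v)
    (hT : ∀ w z, T w z =
      if 0 < marg p w then p (Fin.snoc w z) / marg p w else 1 / (Fintype.card Z : ℝ))
    (z0 : Z) (w : Fin k → Z) :
    marg p (consInit z0 w) * T (consInit z0 w) (w ⟨k - 1, Nat.sub_lt hk Nat.one_pos⟩)
      = p (Fin.cons z0 w) := by
  have hsnoc : (Fin.snoc (consInit z0 w) (w ⟨k - 1, Nat.sub_lt hk Nat.one_pos⟩)
      : Fin (k + 1) → Z) = Fin.cons z0 w := by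
    rw [← cons_apply_last hk z0 w]
    exact Fin.snoc_init_self ((Fin.cons z0 w) : Fin (k + 1) → Z)
  rw [hT]
  split_ifs with h
  · rw [hsnoc]
    field_simp
  · have h0 : marg p (consInit z0 w) = 0 :=
      le_antisymm (not_lt.1 h) (marg_nonneg hp0 _)
    have hple : p (Fin.cons z0 w) ≤ 0 := by
      rw [← hsnoc, ← h0]
      exact snoc_le_marg hp0 _ _
    have : p (Fin.cons z0 w) = 0 := le_antisymm hple (hp0 _)
    rw [h0, this, zero_mul]

lemma approx_invariant (hk : 0 < k) (hp0 : ∀ v, 0 ≤ p v) (hp1 : ∑ v, p v = 1)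
    (hpstat : ∀ w : Fin k → Z, ∑ z, p (Fin.snoc w z) = ∑ z, p (Fin.cons z w))
    (hT : ∀ w z, T w z =
      if 0 < marg p w then p (Fin.snoc w z) / marg p w else 1 / (Fintype.card Z : ℝ)) :
    IsInvariantFor (marg p) T := by
  refine ⟨⟨marg_nonneg hp0, sum_marg hp1⟩, fun w => ?_⟩
  have : ∀ z0 : Z,
      marg p (front (Fin.cons z0 w)) *
        T (front (Fin.cons z0 w)) ((Fin.cons z0 w : Fin (k + 1) → Z) (Fin.last k))
      = p (Fin.cons z0 w) := by
    intro z0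
    rw [cons_apply_last hk]
    exact approx_key hk hp0 hT z0 w
  rw [Finset.sum_congr rfl fun z0 _ => this z0]
  rw [← hpstat w]
  rfl

end Approx

section Push
variable {X Y : Type*} [Fintype X] [Fintype Y] {k : ℕ} (g : X → Y)
  {q : (Fin (k + 1) → X) → ℝ}

lemma push_marg_snoc (u : Fin k → Y) :
    (∑ z, ∑ v : Fin (k + 1) → X, if ∀ i, g (v i) = (Fin.snoc u z : Fin (k + 1) → Y) i then q v else 0)
      = ∑ w : Fin k → X, if ∀ i : Fin k, g (w i) = u i then marg q w else 0 := by
  rw [Finset.sum_comm]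
  have step1 : ∀ v : Fin (k + 1) → X,
      (∑ z, if ∀ i, g (v i) = (Fin.snoc u z : Fin (k + 1) → Y) i then q v else 0)
        = if ∀ i : Fin k, g (v i.castSucc) = u i then q v else 0 := by
    intro v
    by_cases hA : ∀ i : Fin k, g (v i.castSucc) = u i
    · rw [if_pos hA]
      have hiff : ∀ z : Y, (∀ i, g (v i) = (Fin.snoc u z : Fin (k + 1) → Y) i) ↔ g (v (Fin.last k)) = z := by
        intro z
        constructor
        · intro h
          have := h (Fin.last k)
          rwa [Fin.snoc_last] at this
        · intro h i
          refine Fin.lastCases ?_ ?_ i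
          · rw [Fin.snoc_last]; exact h
          · intro j; rw [Fin.snoc_castSucc]; exact hA j
      calc (∑ z, if ∀ i, g (v i) = (Fin.snoc u z : Fin (k + 1) → Y) i then q v else 0)
          = ∑ z, if g (v (Fin.last k)) = z then q v else 0 :=
            Finset.sum_congr rfl fun z _ => if_congr (hiff z) rfl rfl
        _ = q v := by rw [Finset.sum_ite_eq]; simp
    · rw [if_neg hA]
      refine Finset.sum_eq_zero fun z _ => ?_
      rw [if_neg]
      intro h
      exact hA fun j => by have := h j.castSucc; rwa [Fin.snoc_castSucc] at this
  rw [Finset.sum_congr rfl fun v _ => step1 v]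
  rw [sum_snoc (fun v => if ∀ i : Fin k, g (v i.castSucc) = u i then q v else 0)]
  refine Finset.sum_congr rfl fun w _ => ?_
  have hcond : ∀ x : X,
      (∀ i : Fin k, g ((Fin.snoc w x : Fin (k + 1) → X) i.castSucc) = u i)
        ↔ (∀ i : Fin k, g (w i) = u i) := by
    intro x
    constructor
    · intro h i; have := h i; rwa [Fin.snoc_castSucc] at this
    · intro h i; rw [Fin.snoc_castSucc]; exact h i
  by_cases h : ∀ i : Fin k, g (w i) = u i
  · rw [if_pos h]
    calc (∑ x, if ∀ i : Fin k, g ((Fin.snoc w x : Fin (k + 1) → X) i.castSucc) = u i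
            then q (Fin.snoc w x) else 0)
        = ∑ x, q (Fin.snoc w x) :=
          Finset.sum_congr rfl fun x _ => by rw [if_pos ((hcond x).2 h)]
      _ = marg q w := rfl
  · rw [if_neg h]
    exact Finset.sum_eq_zero fun x _ => by rw [if_neg (fun hc => h ((hcond x).1 hc))]

lemma push_marg_cons
    (hstat : ∀ w : Fin k → X, ∑ x, q (Fin.snoc w x) = ∑ x, q (Fin.cons x w))
    (u : Fin k → Y) :
    (∑ z, ∑ v : Fin (k + 1) → X, if ∀ i, g (v i) = (Fin.cons z u : Fin (k + 1) → Y) i then q v else 0)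
      = ∑ w : Fin k → X, if ∀ i : Fin k, g (w i) = u i then marg q w else 0 := by
  rw [Finset.sum_comm]
  have step1 : ∀ v : Fin (k + 1) → X,
      (∑ z, if ∀ i, g (v i) = (Fin.cons z u : Fin (k + 1) → Y) i then q v else 0)
        = if ∀ i : Fin k, g (v i.succ) = u i then q v else 0 := by
    intro v
    by_cases hA : ∀ i : Fin k, g (v i.succ) = u i
    · rw [if_pos hA]
      have hiff : ∀ z : Y, (∀ i, g (v i) = (Fin.cons z u : Fin (k + 1) → Y) i) ↔ g (v 0) = z := by
        intro z
        constructor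
        · intro h
          have := h 0
          rwa [Fin.cons_zero] at this
        · intro h i
          refine Fin.cases ?_ ?_ i
          · rw [Fin.cons_zero]; exact h
          · intro j; rw [Fin.cons_succ]; exact hA j
      calc (∑ z, if ∀ i, g (v i) = (Fin.cons z u : Fin (k + 1) → Y) i then q v else 0)
          = ∑ z, if g (v 0) = z then q v else 0 :=
            Finset.sum_congr rfl fun z _ => if_congr (hiff z) rfl rfl
        _ = q v := by rw [Finset.sum_ite_eq]; simp
    · rw [if_neg hA]
      refine Finset.sum_eq_zero fun z _ => ?_
      rw [if_neg]
      intro h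
      exact hA fun j => by have := h j.succ; rwa [Fin.cons_succ] at this
  rw [Finset.sum_congr rfl fun v _ => step1 v]
  rw [sum_cons (fun v => if ∀ i : Fin k, g (v i.succ) = u i then q v else 0)]
  rw [Finset.sum_comm]
  refine Finset.sum_congr rfl fun w _ => ?_
  have hcond : ∀ x : X,
      (∀ i : Fin k, g ((Fin.cons x w : Fin (k + 1) → X) i.succ) = u i)
        ↔ (∀ i : Fin k, g (w i) = u i) := by
    intro x
    constructor
    · intro h i; have := h i; rwa [Fin.cons_succ] at this
    · intro h i; rw [Fin.cons_succ]; exact h i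
  by_cases h : ∀ i : Fin k, g (w i) = u i
  · rw [if_pos h]
    calc (∑ x, if ∀ i : Fin k, g ((Fin.cons x w : Fin (k + 1) → X) i.succ) = u i
            then q (Fin.cons x w) else 0)
        = ∑ x, q (Fin.cons x w) :=
          Finset.sum_congr rfl fun x _ => by rw [if_pos ((hcond x).2 h)]
      _ = marg q w := (hstat w).symm
  · rw [if_neg h]
    exact Finset.sum_eq_zero fun x _ => by rw [if_neg (fun hc => h ((hcond x).1 hc))]

end Push

/-- The distribution of a length-`m` block of the process `g(X)`, where `X` is a
stationary Markov chain with transition matrix `P` and (initial) invariant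
distribution `π`:
`p_m(y₁,…,y_m) = ∑_{x₁ ∈ g⁻¹(y₁),…,x_m ∈ g⁻¹(y_m)} π(x₁) ∏_{ℓ=2}^m P(x_{ℓ-1}, x_ℓ)`. -/
def wordDist {X Y : Type*} [Fintype X] (P : Matrix X X ℝ) (π : X → ℝ) (g : X → Y)
    {m : ℕ} (y : Fin m → Y) : ℝ :=
  ∑ x : Fin m → X,
    if ∀ i, g (x i) = y i then
      ∏ i : Fin m,
        if (i : ℕ) = 0 then π (x i)
        else P (x ⟨(i : ℕ) - 1, lt_of_le_of_lt (Nat.sub_le _ _) i.isLt⟩) (x i)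
    else 0

set_option maxHeartbeats 2000000 in
/-- Let `q` be a stationary distribution on `X^{k+1}` whose `k`-th order
Markov approximation `P` has a Doob lift with a single recurrent class. Then the `k`-th
order Markov approximation `Q` of the pushforward `r` of `q` under a map `g : X → Y` has a
unique invariant distribution on `Y^k`, namely the `k`-marginal `r_k`. -/
theorem unique_invariant_of_nonmarkov_lumping
    {X Y : Type*} [Fintype X] [Fintype Y]
    (hY : 1 < Fintype.card Y) (g : X → Y) (k : ℕ) (hk : 1 ≤ k)
    (q : (Fin (k + 1) → X) → ℝ) (hq : IsProbDist q)
    (hstat : ∀ w : Fin k → X, ∑ x, q (Fin.snoc w x) = ∑ x, q (Fin.cons x w))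
    (qk : (Fin k → X) → ℝ) (hqk : ∀ w, qk w = ∑ x, q (Fin.snoc w x))
    (P : (Fin k → X) → X → ℝ)
    (hP : ∀ (w : Fin k → X) (x : X), P w x =
      if 0 < qk w then q (Fin.snoc w x) / qk w else 1 / (Fintype.card X : ℝ))
    (r : (Fin (k + 1) → Y) → ℝ)
    (hr : ∀ u : Fin (k + 1) → Y,
      r u = ∑ v : Fin (k + 1) → X, if ∀ i, g (v i) = u i then q v else 0)
    (rk : (Fin k → Y) → ℝ) (hrk : ∀ w, rk w = ∑ z, r (Fin.snoc w z))
    (Q : (Fin k → Y) → Y → ℝ)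
    (hQ : ∀ (w : Fin k → Y) (z : Y), Q w z =
      if 0 < rk w then r (Fin.snoc w z) / rk w else 1 / (Fintype.card Y : ℝ))
    (hrec : SingleRecurrentClass (doobLift P hk)) :
    (∃! μ : (Fin k → Y) → ℝ, IsInvariantFor μ Q) ∧
      ∀ μ : (Fin k → Y) → ℝ, IsInvariantFor μ Q → μ = fun w => rk w := by
  letI : DecidableEq (Fin k → X) := fun a b => Classical.propDecidable (a = b)
  letI : DecidableEq (Fin k → Y) := fun a b => Classical.propDecidable (a = b)
  -- basic cardinalities
  have hYc : 0 < Fintype.card Y := by omega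
  have hXne : Nonempty X := by
    by_contra h
    rw [not_nonempty_iff] at h
    have he : IsEmpty (Fin (k + 1) → X) := ⟨fun f => h.false (f 0)⟩
    have h0 : ∑ v : Fin (k + 1) → X, q v = 0 := by
      rw [Finset.univ_eq_empty, Finset.sum_empty]
    rw [hq.2] at h0
    norm_num at h0
  have hXc : 0 < Fintype.card X := Fintype.card_pos_iff.2 hXne
  -- rewrite the data in terms of `marg`
  have hqk' : qk = marg q := funext hqk
  have hrk' : rk = marg r := funext hrk
  have hP' : ∀ (w : Fin k → X) (x : X), P w x =
      if 0 < marg q w then q (Fin.snoc w x) / marg q w else 1 / (Fintype.card X : ℝ) := by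
    intro w x; rw [hP w x, hqk']
  have hr0 : ∀ u, 0 ≤ r u := by
    intro u
    rw [hr u]
    refine Finset.sum_nonneg fun v _ => ?_
    by_cases h : ∀ i, g (v i) = u i
    · rw [if_pos h]; exact hq.1 v
    · rw [if_neg h]
  -- fiber description of the marginal of r
  have hmargr : ∀ u : Fin k → Y, marg r u =
      ∑ w : Fin k → X, if ∀ i : Fin k, g (w i) = u i then marg q w else 0 := by
    intro u
    calc marg r u
        = ∑ z, ∑ v : Fin (k + 1) → X,
            if ∀ i, g (v i) = (Fin.snoc u z : Fin (k + 1) → Y) i then q v else 0 :=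
          Finset.sum_congr rfl fun z _ => hr (Fin.snoc u z)
      _ = _ := push_marg_snoc g u
  have hrstat : ∀ u : Fin k → Y, ∑ z, r (Fin.snoc u z) = ∑ z, r (Fin.cons z u) := by
    intro u
    have h1 : ∑ z, r (Fin.snoc u z) = marg r u := rfl
    rw [h1, hmargr u, ← push_marg_cons g hstat u]
    exact Finset.sum_congr rfl fun z _ => (hr (Fin.cons z u)).symm
  have hr1 : ∑ u : Fin (k + 1) → Y, r u = 1 := by
    rw [sum_snoc r]
    calc ∑ w : Fin k → Y, ∑ z, r (Fin.snoc w z)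
        = ∑ w : Fin k → Y, ∑ w' : Fin k → X,
            (if ∀ i, g (w' i) = w i then marg q w' else 0) :=
          Finset.sum_congr rfl fun w _ => hmargr w
      _ = ∑ w' : Fin k → X, ∑ w : Fin k → Y,
            (if ∀ i, g (w' i) = w i then marg q w' else 0) := Finset.sum_comm
      _ = ∑ w' : Fin k → X, marg q w' := by
          refine Finset.sum_congr rfl fun w' _ => ?_
          have hcg : ∀ w : Fin k → Y,
              (if ∀ i, g (w' i) = w i then marg q w' else 0)
                = (if (fun i => g (w' i)) = w then marg q w' else 0) :=
            fun w => if_congr (Iff.symm funext_iff) rfl rfl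
          rw [Finset.sum_congr rfl fun w _ => hcg w, Finset.sum_ite_eq]
          simp
      _ = 1 := sum_marg hq.2
  have hQ' : ∀ (w : Fin k → Y) (z : Y), Q w z =
      if 0 < marg r w then r (Fin.snoc w z) / marg r w else 1 / (Fintype.card Y : ℝ) := by
    intro w z; rw [hQ w z, hrk']
  -- transition matrices and their Doob lifts
  have hTP : IsTransMat P := approx_transMat hXc hq.1 hP'
  have hTQ : IsTransMat Q := approx_transMat hYc hr0 hQ'
  have hSP : IsStochastic (doobLift P hk) := doobLift_stochastic hk hTP
  have hSQ : IsStochastic (doobLift Q hk) := doobLift_stochastic hk hTQ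
  have hinvq : IsInvariantFor (marg q) P := approx_invariant hk hq.1 hq.2 hstat hP'
  have hinvr : IsInvariantFor (marg r) Q := approx_invariant hk hr0 hr1 hrstat hQ'
  have hIq : InvDist (marg q) (doobLift P hk) := by
    obtain ⟨hp, hm⟩ := (isInvariantFor_iff_invDist P hk (marg q)).1 hinvq
    exact ⟨hp.1, hp.2, hm⟩
  have hIr : InvDist (marg r) (doobLift Q hk) := by
    obtain ⟨hp, hm⟩ := (isInvariantFor_iff_invDist Q hk (marg r)).1 hinvr
    exact ⟨hp.1, hp.2, hm⟩
  -- fiber positivity facts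
  have hfibpos : ∀ u : Fin k → Y, 0 < marg r u →
      ∃ w : Fin k → X, (∀ i, g (w i) = u i) ∧ 0 < marg q w := by
    intro u hu
    by_contra hc
    push_neg at hc
    have hle : marg r u ≤ 0 := by
      rw [hmargr u]
      refine Finset.sum_nonpos fun w _ => ?_
      by_cases h : ∀ i, g (w i) = u i
      · rw [if_pos h]; exact hc w h
      · rw [if_neg h]
    linarith
  have hfible : ∀ w : Fin k → X, marg q w ≤ marg r (fun i => g (w i)) := by
    intro w
    rw [hmargr]
    have hterm := Finset.single_le_sum
      (f := fun w' : Fin k → X =>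
        if ∀ i : Fin k, g (w' i) = g (w i) then marg q w' else 0)
      (fun w' _ => by
        show (0 : ℝ) ≤ if ∀ i : Fin k, g (w' i) = g (w i) then marg q w' else 0
        by_cases h : ∀ i : Fin k, g (w' i) = g (w i)
        · rw [if_pos h]; exact marg_nonneg hq.1 w'
        · rw [if_neg h])
      (Finset.mem_univ w)
    refine le_trans ?_ hterm
    show marg q w ≤ if ∀ i : Fin k, g (w i) = g (w i) then marg q w else 0
    rw [if_pos (fun i => rfl)]
  have hrsnocge : ∀ (w : Fin k → X) (x : X),
      q (Fin.snoc w x) ≤ r (Fin.snoc (fun i => g (w i)) (g x)) := by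
    intro w x
    rw [hr]
    have hcondv : ∀ i, g ((Fin.snoc w x : Fin (k + 1) → X) i)
        = (Fin.snoc (fun j => g (w j)) (g x) : Fin (k + 1) → Y) i := by
      intro i
      refine Fin.lastCases ?_ ?_ i
      · rw [Fin.snoc_last, Fin.snoc_last]
      · intro j; rw [Fin.snoc_castSucc, Fin.snoc_castSucc]
    have hterm := Finset.single_le_sum
      (f := fun v : Fin (k + 1) → X =>
        if ∀ i, g (v i) = (Fin.snoc (fun j => g (w j)) (g x) : Fin (k + 1) → Y) i
        then q v else 0)
      (fun v _ => by
        show (0 : ℝ) ≤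
          if ∀ i, g (v i) = (Fin.snoc (fun j => g (w j)) (g x) : Fin (k + 1) → Y) i
          then q v else 0
        by_cases h : ∀ i, g (v i) = (Fin.snoc (fun j => g (w j)) (g x) : Fin (k + 1) → Y) i
        · rw [if_pos h]; exact hq.1 v
        · rw [if_neg h])
      (Finset.mem_univ (Fin.snoc w x))
    refine le_trans ?_ hterm
    show q (Fin.snoc w x) ≤
      if ∀ i, g ((Fin.snoc w x : Fin (k + 1) → X) i)
          = (Fin.snoc (fun j => g (w j)) (g x) : Fin (k + 1) → Y) i
      then q (Fin.snoc w x) else 0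
    rw [if_pos hcondv]
  have hQpos : ∀ (w : Fin k → X) (x : X), 0 < marg q w → 0 < q (Fin.snoc w x) →
      0 < Q (fun i => g (w i)) (g x) := by
    intro w x hw hx
    have h1 : 0 < marg r (fun i => g (w i)) := lt_of_lt_of_le hw (hfible w)
    rw [hQ', if_pos h1]
    exact div_pos (lt_of_lt_of_le hx (hrsnocge w x)) h1
  have hgshift : ∀ (w : Fin k → X) (x : X),
      (fun i => g (shiftIn w x i)) = shiftIn (fun i => g (w i)) (g x) := by
    intro w x
    funext i
    rcases i with ⟨j, hj⟩
    by_cases h : j + 1 < k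
    · rw [shiftIn_apply_lt _ _ hj h, shiftIn_apply_lt _ _ hj h]
    · have he : (⟨j, hj⟩ : Fin k) = ⟨k - 1, Nat.sub_lt hk Nat.one_pos⟩ := by
        apply Fin.ext; simp; omega
      rw [he, shiftIn_apply_last hk, shiftIn_apply_last hk]
  -- lumping: positive paths map to positive paths
  have lump_pow : ∀ n (w w' : Fin k → X), 0 < marg q w → 0 < (doobLift P hk ^ n) w w' →
      0 < (doobLift Q hk ^ n) (fun i => g (w i)) (fun i => g (w' i)) := by
    intro n
    induction n with
    | zero =>
      intro w w' hw hpos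
      rw [pow_zero] at hpos ⊢
      by_cases h : w = w'
      · subst h
        rw [Matrix.one_apply_eq]
        exact one_pos
      · rw [Matrix.one_apply_ne h] at hpos
        exact absurd hpos (lt_irrefl 0)
    | succ n ih =>
      intro w w' hw hpos
      rw [pow_succ', Matrix.mul_apply] at hpos
      obtain ⟨t, ht⟩ : ∃ t, 0 < doobLift P hk w t * (doobLift P hk ^ n) t w' := by
        by_contra hcon
        push_neg at hcon
        have hle : (∑ t, doobLift P hk w t * (doobLift P hk ^ n) t w') ≤ 0 :=
          Finset.sum_nonpos fun t _ => hcon t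
        linarith
      have h1 : 0 < doobLift P hk w t := by
        rcases mul_pos_iff.1 ht with ⟨h, _⟩ | ⟨h, _⟩
        · exact h
        · exact absurd (hSP.1 w t) (not_le.2 h)
      have h2 : 0 < (doobLift P hk ^ n) t w' := by
        rcases mul_pos_iff.1 ht with ⟨_, h⟩ | ⟨_, h⟩
        · exact h
        · exact absurd (pow_entry_nonneg hSP n t w') (not_le.2 h)
      rw [doobLift_apply] at h1
      by_cases hc : ∀ (i : Fin k) (hlt : (i : ℕ) + 1 < k), t i = w ⟨(i : ℕ) + 1, hlt⟩
      swap
      · rw [if_neg hc] at h1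
        exact absurd h1 (lt_irrefl 0)
      rw [if_pos hc] at h1
      set x := t ⟨k - 1, Nat.sub_lt hk Nat.one_pos⟩ with hx
      have hteq : t = shiftIn w x := (doobLift_cond_iff hk w t).1 hc
      have hq_pos : 0 < q (Fin.snoc w x) := by
        rw [hP', if_pos hw] at h1
        have hm := mul_pos h1 hw
        rwa [div_mul_cancel₀ _ (ne_of_gt hw)] at hm
      have hmt : 0 < marg q t := by
        rw [hteq]
        exact lt_of_lt_of_le hq_pos (le_marg_back hq.1 hstat (Fin.snoc w x))
      have hQstep : 0 < doobLift Q hk (fun i => g (w i)) (fun i => g (t i)) := by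
        rw [hteq, hgshift w x, doobLift_apply_shiftIn]
        exact hQpos w x hw hq_pos
      have hIH := ih t w' hmt h2
      rw [pow_succ', Matrix.mul_apply]
      have hterm : 0 < doobLift Q hk (fun i => g (w i)) (fun i => g (t i)) *
          (doobLift Q hk ^ n) (fun i => g (t i)) (fun i => g (w' i)) := mul_pos hQstep hIH
      refine lt_of_lt_of_le hterm (Finset.single_le_sum
        (f := fun s : Fin k → Y => doobLift Q hk (fun i => g (w i)) s *
          (doobLift Q hk ^ n) s (fun i => g (w' i)))
        (fun s _ => mul_nonneg (hSQ.1 (fun i => g (w i)) s)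
          (pow_entry_nonneg hSQ n s (fun i => g (w' i))))
        (Finset.mem_univ (fun i => g (t i))))
  have hacc_transfer : ∀ w w' : Fin k → X, 0 < marg q w →
      Accessible (doobLift P hk) w w' →
      Accessible (doobLift Q hk) (fun i => g (w i)) (fun i => g (w' i)) := by
    rintro w w' hw ⟨n, hn, hp⟩
    exact ⟨n, hn, lump_pow n w w' hw hp⟩
  -- the support of marg r is nonempty
  obtain ⟨u0, hu0⟩ : ∃ u0 : Fin k → Y, 0 < marg r u0 := by
    by_contra hcon
    push_neg at hcon
    have hle : ∑ w : Fin k → Y, marg r w ≤ 0 := Finset.sum_nonpos fun w _ => hcon w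
    rw [sum_marg hr1] at hle
    linarith
  -- one positive step staying in the support
  have hstep1 : ∀ u : Fin k → Y, 0 < marg r u →
      ∃ s, 0 < marg r s ∧ 0 < doobLift Q hk u s := by
    intro u hu
    obtain ⟨z, hz⟩ : ∃ z, 0 < r (Fin.snoc u z) := by
      by_contra hcon
      push_neg at hcon
      have hle : marg r u ≤ 0 := Finset.sum_nonpos fun z _ => hcon z
      linarith
    refine ⟨shiftIn u z, ?_, ?_⟩
    · exact lt_of_lt_of_le hz (le_marg_back hr0 hrstat (Fin.snoc u z))
    · rw [doobLift_apply_shiftIn, hQ', if_pos hu]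
      exact div_pos hz hu
  -- from any state, the support is accessible
  have hreach : ∀ u : Fin k → Y, ∃ s, 0 < marg r s ∧ Accessible (doobLift Q hk) u s := by
    have hphi : ∀ m : ℕ, ∀ u : Fin k → Y,
        (∀ i : Fin k, m ≤ (i : ℕ) →
          u i = u0 ⟨(i : ℕ) - m, lt_of_le_of_lt (Nat.sub_le _ _) i.isLt⟩) →
        ∃ s, 0 < marg r s ∧ Accessible (doobLift Q hk) u s := by
      intro m
      induction m with
      | zero =>
        intro u hcond
        have hu : u = u0 := by
          funext i
          have hi := hcond i (Nat.zero_le _)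
          rw [hi]
          congr 1
        obtain ⟨s, hs1, hs2⟩ := hstep1 u (by rw [hu]; exact hu0)
        exact ⟨s, hs1, ⟨1, le_refl 1, by rw [pow_one]; exact hs2⟩⟩
      | succ m ih =>
        intro u hcond
        by_cases hu : 0 < marg r u
        · obtain ⟨s, hs1, hs2⟩ := hstep1 u hu
          exact ⟨s, hs1, ⟨1, le_refl 1, by rw [pow_one]; exact hs2⟩⟩
        · set z : Y := u0 ⟨k - 1 - m, by omega⟩ with hzdef
          set u' := shiftIn u z with hu'def
          have hstep : 0 < doobLift Q hk u u' := by
            rw [hu'def, doobLift_apply_shiftIn, hQ', if_neg hu]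
            have : (0 : ℝ) < (Fintype.card Y : ℝ) := by exact_mod_cast hYc
            positivity
          have hcond' : ∀ i : Fin k, m ≤ (i : ℕ) →
              u' i = u0 ⟨(i : ℕ) - m, lt_of_le_of_lt (Nat.sub_le _ _) i.isLt⟩ := by
            intro i hi
            rcases i with ⟨j, hj⟩
            simp only at hi
            by_cases hlt : j + 1 < k
            · rw [hu'def, shiftIn_apply_lt _ _ hj hlt]
              have hc2 := hcond ⟨j + 1, hlt⟩ (by simpa using Nat.succ_le_succ hi)
              rw [hc2]
              congr 1
              apply Fin.ext
              simp
            · have hje : (⟨j, hj⟩ : Fin k) = ⟨k - 1, Nat.sub_lt hk Nat.one_pos⟩ := by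
                apply Fin.ext; simp; omega
              rw [hu'def, hje, shiftIn_apply_last hk, hzdef]
          obtain ⟨s, hs1, hs2⟩ := ih u' hcond'
          exact ⟨s, hs1, accessible_trans hSQ ⟨1, le_refl 1, by rw [pow_one]; exact hstep⟩ hs2⟩
    intro u
    exact hphi k u (fun i hi => absurd i.isLt (by omega))
  -- recurrent states of the lift of Q = support of marg r
  have hsupp_rec : ∀ u, 0 < marg r u → Recurrent (doobLift Q hk) u :=
    fun u hu => supp_recurrent hSQ hIr hu
  have hrec_supp : ∀ u, Recurrent (doobLift Q hk) u → 0 < marg r u := by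
    intro u hu
    obtain ⟨s, hs1, hs2⟩ := hreach u
    exact supp_closed hSQ hIr hs1 (hu s hs2)
  have hsupp_acc : ∀ u u' : Fin k → Y, 0 < marg r u → 0 < marg r u' →
      Accessible (doobLift Q hk) u u' := by
    intro u u' hu hu'
    obtain ⟨w, hgw, hw⟩ := hfibpos u hu
    obtain ⟨w', hgw', hw'⟩ := hfibpos u' hu'
    have hwrec : Recurrent (doobLift P hk) w := supp_recurrent hSP hIq hw
    have hw'rec : Recurrent (doobLift P hk) w' := supp_recurrent hSP hIq hw'
    have hPacc := hrec.2 w w' hwrec hw'rec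
    have htrans := hacc_transfer w w' hw hPacc
    have hgweq : (fun i => g (w i)) = u := funext hgw
    have hgw'eq : (fun i => g (w' i)) = u' := funext hgw'
    rwa [hgweq, hgw'eq] at htrans
  have hSRC : SingleRecurrentClass (doobLift Q hk) := by
    constructor
    · exact ⟨u0, hsupp_rec u0 hu0⟩
    · intro u u' hu hu'
      exact hsupp_acc u u' (hrec_supp u hu) (hrec_supp u' hu')
  -- uniqueness
  have key : ∀ μ : (Fin k → Y) → ℝ, IsInvariantFor μ Q → μ = marg r := by
    intro μ hμ
    obtain ⟨hp, hm⟩ := (isInvariantFor_iff_invDist Q hk μ).1 hμ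
    obtain ⟨hp', hm'⟩ := (isInvariantFor_iff_invDist Q hk (marg r)).1 hinvr
    exact invdist_unique hSQ hSRC ⟨hp.1, hp.2, hm⟩ ⟨hp'.1, hp'.2, hm'⟩
  have hrk_fun : (fun w => rk w) = marg r := funext hrk
  constructor
  · refine ⟨fun w => rk w, ?_, ?_⟩
    · rw [hrk_fun]
      exact hinvr
    · intro μ hμ
      rw [key μ hμ, hrk_fun]
  · intro μ hμ
    rw [key μ hμ, hrk_fun]
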